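/- Assume τ > 0 (equivalently q < p*(n)). Then the following are equivalent: (i) there exist real numbers 0 < B < C such that Σ(u) < 0 for u ∈ (0,B), Σ(u) > 0 for u ∈ (B,C), and Σ(u) < 0 for u ∈ (C,∞); (ii) ω < ω_{σ,τ,p,q} := σ·((q-p)/(q-1))·(σ(p-1)/(τ(q-1)))^{(p-1)/(q-p)}. -/

import Mathlib

/-- `σ = n/(p+1) - (n-2)/2`. -/
noncomputable def sigma (n : ℕ) (p : ℝ) : ℝ := n / (p + 1) - ((n : ℝ) - 2) / 2

/-- `τ = n/(q+1) - (n-2)/2`. -/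
noncomputable def tau (n : ℕ) (q : ℝ) : ℝ := n / (q + 1) - ((n : ℝ) - 2) / 2

/-- The Pohozaev polynomial `Σ(u) = -2ω u² + 2σ u^{p+1} - 2τ u^{q+1}`. -/
noncomputable def Sig (n : ℕ) (ω p q u : ℝ) : ℝ :=
  -2 * ω * u ^ 2 + 2 * sigma n p * u ^ (p + 1) - 2 * tau n q * u ^ (q + 1)

/-- The critical frequency `ω_{σ,τ,p,q}`. -/
noncomputable def omegaSig (n : ℕ) (p q : ℝ) : ℝ :=
  sigma n p * ((q - p) / (q - 1)) *
    ((sigma n p * (p - 1)) / (tau n q * (q - 1))) ^ ((p - 1) / (q - p))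

/-- For `τ > 0`, there exist `0 < B < C` with `Σ < 0` on `(0,B)`, `Σ > 0` on `(B,C)` and
`Σ < 0` on `(C,∞)` if and only if `ω < ω_{σ,τ,p,q}`. -/
theorem Sigma_sign_iff (p q ω : ℝ) (n : ℕ) (hn : 1 ≤ n)
    (hp : 1 < p) (hpq : p < q) (hω : 0 < ω) (hτ : 0 < tau n q) :
    (∃ B C : ℝ, 0 < B ∧ B < C ∧
      (∀ u, 0 < u → u < B → Sig n ω p q u < 0) ∧
      (∀ u, B < u → u < C → 0 < Sig n ω p q u) ∧
      (∀ u, C < u → Sig n ω p q u < 0)) ↔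
    ω < omegaSig n p q := by
  have hn0 : (0:ℝ) < n := by exact_mod_cast hn
  have hp1 : (0:ℝ) < p + 1 := by linarith
  have hστ : tau n q < sigma n p := by
    unfold sigma tau
    have : (n:ℝ) / (q+1) < n / (p+1) :=
      div_lt_div_of_pos_left hn0 hp1 (by linarith)
    linarith
  have hσ : 0 < sigma n p := lt_trans hτ hστ
  set σ := sigma n p with hσdef
  set τ := tau n q with hτdef
  set h : ℝ → ℝ := fun u => σ * u ^ (p - 1) - τ * u ^ (q - 1) with hdef
  have hqp : (0:ℝ) < q - p := by linarith
  have hpm : (0:ℝ) < p - 1 := by linarith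
  have hqm : (0:ℝ) < q - 1 := by linarith
  have ha : 0 < σ * (p - 1) := by positivity
  have hb : 0 < τ * (q - 1) := by positivity
  set r : ℝ := σ * (p - 1) / (τ * (q - 1)) with hrdef
  have hr : 0 < r := by positivity
  set U : ℝ := r ^ (q - p)⁻¹ with hUdef
  have hU : 0 < U := Real.rpow_pos_of_pos hr _
  have hUpow : U ^ (q - p) = r := by
    rw [hUdef, ← Real.rpow_mul hr.le, inv_mul_cancel₀ hqp.ne', Real.rpow_one]
  have hUp1 : U ^ (p - 1) = r ^ ((p - 1) / (q - p)) := by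
    rw [hUdef, ← Real.rpow_mul hr.le]
    congr 1
    field_simp
  have hUq1 : U ^ (q - 1) = U ^ (p - 1) * r := by
    rw [← hUpow, ← Real.rpow_add hU]
    congr 1
    ring
  -- value at the maximum point
  have hhU : h U = omegaSig n p q := by
    simp only [hdef]
    rw [hUq1, hUp1, omegaSig, ← hσdef, ← hτdef, ← hrdef, hrdef]
    field_simp
    ring
  -- factorization of Sig
  have hfac : ∀ u : ℝ, 0 < u → Sig n ω p q u = 2 * u ^ 2 * (h u - ω) := by
    intro u hu
    have e1 : u ^ (p + 1) = u ^ 2 * u ^ (p - 1) := by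
      rw [← Real.rpow_natCast u 2, ← Real.rpow_add hu]
      congr 1; push_cast; ring
    have e2 : u ^ (q + 1) = u ^ 2 * u ^ (q - 1) := by
      rw [← Real.rpow_natCast u 2, ← Real.rpow_add hu]
      congr 1; push_cast; ring
    simp only [Sig, ← hσdef, ← hτdef, e1, e2, hdef]
    ring
  -- derivative of h
  have hderiv : ∀ u : ℝ, 0 < u →
      HasDerivAt h (u ^ (p - 1 - 1) * (σ * (p - 1) - τ * (q - 1) * u ^ (q - p))) u := by
    intro u hu
    have d1 : HasDerivAt (fun x : ℝ => σ * x ^ (p - 1)) (σ * ((p - 1) * u ^ (p - 1 - 1))) u :=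
      (Real.hasDerivAt_rpow_const (Or.inl hu.ne')).const_mul σ
    have d2 : HasDerivAt (fun x : ℝ => τ * x ^ (q - 1)) (τ * ((q - 1) * u ^ (q - 1 - 1))) u :=
      (Real.hasDerivAt_rpow_const (Or.inl hu.ne')).const_mul τ
    have := d1.sub d2
    refine this.congr_deriv ?_
    have e3 : u ^ (q - 1 - 1) = u ^ (p - 1 - 1) * u ^ (q - p) := by
      rw [← Real.rpow_add hu]; congr 1; ring
    rw [e3]; ring
  have hcont : ∀ u : ℝ, 0 < u → ContinuousAt h u := fun u hu => (hderiv u hu).continuousAt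
  -- strict monotonicity on (0, U]
  have hmono : StrictMonoOn h (Set.Ioc 0 U) := by
    apply strictMonoOn_of_deriv_pos (convex_Ioc 0 U)
    · intro u hu; exact (hcont u hu.1).continuousWithinAt
    · intro u hu
      rw [interior_Ioc] at hu
      rw [(hderiv u hu.1).deriv]
      apply mul_pos (Real.rpow_pos_of_pos hu.1 _)
      have : u ^ (q - p) < r := by
        rw [← hUpow]
        exact Real.rpow_lt_rpow hu.1.le hu.2 hqp
      rw [hrdef, lt_div_iff₀ hb] at this
      nlinarith
  -- strict antitonicity on [U, ∞)
  have hanti : StrictAntiOn h (Set.Ici U) := by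
    apply strictAntiOn_of_deriv_neg (convex_Ici U)
    · intro u hu; exact (hcont u (lt_of_lt_of_le hU hu)).continuousWithinAt
    · intro u hu
      rw [interior_Ici] at hu
      have hu0 : 0 < u := lt_trans hU hu
      rw [(hderiv u hu0).deriv]
      apply mul_neg_of_pos_of_neg (Real.rpow_pos_of_pos hu0 _)
      have : r < u ^ (q - p) := by
        rw [← hUpow]
        exact Real.rpow_lt_rpow hU.le hu hqp
      rw [hrdef, div_lt_iff₀ hb] at this
      nlinarith
  -- global bound
  have hle : ∀ u : ℝ, 0 < u → h u ≤ h U := by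
    intro u hu
    rcases le_or_gt u U with hc | hc
    · rcases eq_or_lt_of_le hc with rfl | hc
      · exact le_rfl
      · exact (hmono ⟨hu, hc.le⟩ ⟨hU, le_refl U⟩ hc).le
    · exact (hanti (le_refl U) hc.le hc).le
  constructor
  · rintro ⟨B, C, hB, hBC, _, hmid, _⟩
    have hu : 0 < (B + C) / 2 := by linarith
    have := hmid ((B + C) / 2) (by linarith) (by linarith)
    rw [hfac _ hu] at this
    have h2 : 0 < 2 * ((B + C) / 2) ^ 2 := by positivity
    have : 0 < h ((B + C) / 2) - ω := by
      by_contra hcon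
      push_neg at hcon
      have := mul_nonpos_of_nonneg_of_nonpos h2.le hcon
      linarith
    have := hle ((B + C) / 2) hu
    rw [hhU] at this
    linarith
  · intro hω'
    rw [← hhU] at hω'
    -- small point with h ε < ω
    set ε0 : ℝ := (ω / σ) ^ (p - 1)⁻¹ with hε0def
    have hε0 : 0 < ε0 := Real.rpow_pos_of_pos (by positivity) _
    set ε : ℝ := min (U / 2) (ε0 / 2) with hεdef
    have hε : 0 < ε := lt_min (by linarith) (by linarith)
    have hεU : ε < U := lt_of_le_of_lt (min_le_left _ _) (by linarith)
    have hεsmall : h ε < ω := by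
      have h1 : ε ^ (p - 1) < ε0 ^ (p - 1) :=
        Real.rpow_lt_rpow hε.le (lt_of_le_of_lt (min_le_right _ _) (by linarith)) hpm
      have h2 : ε0 ^ (p - 1) = ω / σ := by
        rw [hε0def, ← Real.rpow_mul (by positivity), inv_mul_cancel₀ hpm.ne', Real.rpow_one]
      have h3 : σ * ε ^ (p - 1) < ω := by
        rw [h2] at h1
        calc σ * ε ^ (p - 1) < σ * (ω / σ) := by exact (mul_lt_mul_iff_right₀ hσ).2 h1
        _ = ω := by field_simp
      have h4 : 0 < τ * ε ^ (q - 1) := by positivity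
      simp only [hdef]
      linarith
    -- large point with h M < ω
    set M : ℝ := max U ((σ / τ) ^ (q - p)⁻¹) + 1 with hMdef
    have hUM : U < M := lt_of_le_of_lt (le_max_left _ _) (by rw [hMdef]; linarith)
    have hM0 : 0 < M := lt_trans hU hUM
    have hMbig : h M < ω := by
      have h1 : (σ / τ) ^ (q - p)⁻¹ < M := lt_of_le_of_lt (le_max_right _ _) (by rw [hMdef]; linarith)
      have h2 : σ / τ < M ^ (q - p) := by
        have := Real.rpow_lt_rpow (Real.rpow_pos_of_pos (by positivity) (q - p)⁻¹ : (0:ℝ) < _).le h1 hqp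
        rwa [← Real.rpow_mul (by positivity), inv_mul_cancel₀ hqp.ne', Real.rpow_one] at this
      have h3 : σ < τ * M ^ (q - p) := by
        rw [div_lt_iff₀ hτ] at h2; linarith
      have e3 : M ^ (q - 1) = M ^ (p - 1) * M ^ (q - p) := by
        rw [← Real.rpow_add hM0]; congr 1; ring
      have h5 : h M = M ^ (p - 1) * (σ - τ * M ^ (q - p)) := by
        simp only [hdef, e3]; ring
      have h6 : 0 < M ^ (p - 1) := Real.rpow_pos_of_pos hM0 _
      rw [h5]
      have := mul_neg_of_pos_of_neg h6 (by linarith : σ - τ * M ^ (q - p) < 0)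
      linarith
    -- find B by IVT on [ε, U]
    have hcontIcc : ∀ a b : ℝ, 0 < a → ContinuousOn h (Set.Icc a b) := by
      intro a b hA
      intro u hu
      exact (hcont u (lt_of_lt_of_le hA hu.1)).continuousWithinAt
    obtain ⟨B, hBmem, hBval⟩ :=
      intermediate_value_Ioo hεU.le (hcontIcc ε U hε) ⟨hεsmall, hω'⟩
    obtain ⟨C, hCmem, hCval⟩ :=
      intermediate_value_Ioo' hUM.le (hcontIcc U M hU) ⟨hMbig, hω'⟩
    have hB0 : 0 < B := lt_trans hε hBmem.1
    have hBU : B < U := hBmem.2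
    have hUC : U < C := hCmem.1
    refine ⟨B, C, hB0, lt_trans hBU hUC, ?_, ?_, ?_⟩
    · intro u hu huB
      rw [hfac u hu]
      have : h u < h B := hmono ⟨hu, by linarith⟩ ⟨hB0, hBU.le⟩ huB
      rw [hBval] at this
      exact mul_neg_of_pos_of_neg (by positivity) (by linarith)
    · intro u huB huC
      have hu : 0 < u := lt_trans hB0 huB
      rw [hfac u hu]
      have hgt : ω < h u := by
        rcases le_or_gt u U with hc | hc
        · have : h B < h u := hmono ⟨hB0, hBU.le⟩ ⟨hu, hc⟩ huB
          rw [hBval] at this; exact this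
        · have : h C < h u := hanti hc.le hUC.le huC  -- wrong order, fix
          rw [hCval] at this; exact this
      exact mul_pos (by positivity) (by linarith)
    · intro u huC
      have hu : 0 < u := lt_trans (lt_trans hU hUC) huC
      rw [hfac u hu]
      have : h u < h C := hanti hUC.le (by linarith : U ≤ u) huC
      rw [hCval] at this
      exact mul_neg_of_pos_of_neg (by positivity) (by linarith)
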